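/- Let α ∈ (0,1), ε ∈ (0,1), K ∈ ℕ with K ≥ 1, let (η_t)_{t≥1} be a sequence of positive reals, let (s̃_t)_{t≥1} and (s_{t,y})_{t≥1, 1≤y≤K} be arbitrary sequences in [0,1], let τ_1 ∈ [0,1], and define τ_{t+1} = τ_t − η_t·g̃(τ_t, s̃_t, (s_{t,y})_{y=1}^K). Then for every integer T ≥ 1: −(max_{1≤t≤T−1} η_t)·(α + ε/(1−ε)) ≤ τ_T ≤ 1 + (max_{1≤t≤T−1} η_t)·(1/(1−ε) − α), with the convention that the maximum over an empty index set is 0. -/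

import Mathlib

/-- The robust pinball subgradient. -/
noncomputable def robustGrad (α ε : ℝ) (K : ℕ) (τ stil : ℝ) (s : Fin K → ℝ) : ℝ :=
  (1 / (1 - ε)) * ((if stil ≤ τ then (1:ℝ) else 0) - (1 - α))
    - (ε / ((K : ℝ) * (1 - ε))) * ∑ y : Fin K, ((if s y ≤ τ then (1:ℝ) else 0) - (1 - α))

section helpers

lemma biSup_mem_nonneg (s : Finset ℕ) (f : ℕ → ℝ) (hf : ∀ t ∈ s, 0 ≤ f t) :
    0 ≤ ⨆ t ∈ s, f t := by
  refine Real.iSup_nonneg fun t => Real.iSup_nonneg fun ht => hf t ht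

lemma biSup_mem_bdd (s : Finset ℕ) (f : ℕ → ℝ) (hf : ∀ t ∈ s, 0 ≤ f t) :
    BddAbove (Set.range fun t => ⨆ (_ : t ∈ s), f t) := by
  refine ⟨∑ t ∈ s, f t, ?_⟩
  rintro x ⟨t, rfl⟩
  simp only
  by_cases ht : t ∈ s
  · rw [ciSup_pos ht]
    exact Finset.single_le_sum hf ht
  · haveI : IsEmpty (t ∈ s) := ⟨ht⟩
    rw [Real.iSup_of_isEmpty]
    exact Finset.sum_nonneg hf

lemma le_biSup_mem (s : Finset ℕ) (f : ℕ → ℝ) (hf : ∀ t ∈ s, 0 ≤ f t) {t : ℕ}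
    (ht : t ∈ s) : f t ≤ ⨆ t ∈ s, f t := by
  have h := le_ciSup (biSup_mem_bdd s f hf) t
  rwa [ciSup_pos ht] at h

lemma biSup_mem_mono (s s' : Finset ℕ) (f : ℕ → ℝ) (hf' : ∀ t ∈ s', 0 ≤ f t)
    (hss : s ⊆ s') : (⨆ t ∈ s, f t) ≤ ⨆ t ∈ s', f t := by
  refine ciSup_le fun t => ?_
  by_cases ht : t ∈ s
  · rw [ciSup_pos ht]
    exact le_biSup_mem s' f hf' (hss ht)
  · haveI : IsEmpty (t ∈ s) := ⟨ht⟩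
    rw [Real.iSup_of_isEmpty]
    exact biSup_mem_nonneg s' f hf'

lemma grad_bounds (α ε : ℝ) (hα : α ∈ Set.Ioo (0:ℝ) 1) (hε : ε ∈ Set.Ioo (0:ℝ) 1)
    (K : ℕ) (hK : 1 ≤ K) (τ stil : ℝ) (s : Fin K → ℝ)
    (hstil : stil ∈ Set.Icc (0:ℝ) 1) (hs : ∀ y, s y ∈ Set.Icc (0:ℝ) 1) :
    -(1 / (1 - ε) - α) ≤ robustGrad α ε K τ stil s ∧
      robustGrad α ε K τ stil s ≤ α + ε / (1 - ε) := by
  obtain ⟨hα0, hα1⟩ := hα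
  obtain ⟨hε0, hε1⟩ := hε
  have h1ε : (0:ℝ) < 1 - ε := by linarith
  have hK0 : (0:ℝ) < (K:ℝ) := by exact_mod_cast hK
  have hI : (0:ℝ) ≤ (if stil ≤ τ then (1:ℝ) else 0) ∧ (if stil ≤ τ then (1:ℝ) else 0) ≤ 1 := by
    split <;> norm_num
  have hSle : ∑ y : Fin K, ((if s y ≤ τ then (1:ℝ) else 0) - (1 - α)) ≤ (K:ℝ) * α := by
    calc ∑ y : Fin K, ((if s y ≤ τ then (1:ℝ) else 0) - (1 - α))
        ≤ ∑ _y : Fin K, α := by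
          refine Finset.sum_le_sum fun y _ => ?_
          split <;> linarith
      _ = (K:ℝ) * α := by simp [mul_comm]
  have hSge : (K:ℝ) * (α - 1) ≤ ∑ y : Fin K, ((if s y ≤ τ then (1:ℝ) else 0) - (1 - α)) := by
    calc (K:ℝ) * (α - 1) = ∑ _y : Fin K, (α - 1) := by simp [mul_comm]; ring
      _ ≤ ∑ y : Fin K, ((if s y ≤ τ then (1:ℝ) else 0) - (1 - α)) := by
          refine Finset.sum_le_sum fun y _ => ?_
          split <;> linarith
  have hc1 : (0:ℝ) < 1 / (1 - ε) := by positivity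
  have hc2 : (0:ℝ) < ε / ((K:ℝ) * (1 - ε)) := by positivity
  have hc2K : ε / ((K:ℝ) * (1 - ε)) * ((K:ℝ) * α) = ε / (1 - ε) * α := by
    field_simp
  have hc2K' : ε / ((K:ℝ) * (1 - ε)) * ((K:ℝ) * (α - 1)) = ε / (1 - ε) * (α - 1) := by
    field_simp
  constructor
  · unfold robustGrad
    have h1 : 1 / (1 - ε) * ((if stil ≤ τ then (1:ℝ) else 0) - (1 - α)) ≥
        1 / (1 - ε) * (α - 1) := by
      apply mul_le_mul_of_nonneg_left _ hc1.le
      split <;> linarith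
    have h2 : ε / ((K:ℝ) * (1 - ε)) * ∑ y : Fin K, ((if s y ≤ τ then (1:ℝ) else 0) - (1 - α)) ≤
        ε / ((K:ℝ) * (1 - ε)) * ((K:ℝ) * α) := mul_le_mul_of_nonneg_left hSle hc2.le
    rw [hc2K] at h2
    have : 1 / (1 - ε) * (α - 1) - ε / (1 - ε) * α = -(1 / (1 - ε) - α) := by
      field_simp
      ring
    linarith
  · unfold robustGrad
    have h1 : 1 / (1 - ε) * ((if stil ≤ τ then (1:ℝ) else 0) - (1 - α)) ≤
        1 / (1 - ε) * α := by
      apply mul_le_mul_of_nonneg_left _ hc1.le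
      split <;> linarith
    have h2 : ε / ((K:ℝ) * (1 - ε)) * ((K:ℝ) * (α - 1)) ≤
        ε / ((K:ℝ) * (1 - ε)) * ∑ y : Fin K, ((if s y ≤ τ then (1:ℝ) else 0) - (1 - α)) :=
      mul_le_mul_of_nonneg_left hSge hc2.le
    rw [hc2K'] at h2
    have : 1 / (1 - ε) * α - ε / (1 - ε) * (α - 1) = α + ε / (1 - ε) := by
      field_simp
      ring
    linarith

lemma grad_high (α ε : ℝ) (hε : ε ∈ Set.Ioo (0:ℝ) 1)
    (K : ℕ) (hK : 1 ≤ K) (τ stil : ℝ) (s : Fin K → ℝ)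
    (hstil : stil ≤ τ) (hs : ∀ y, s y ≤ τ) :
    robustGrad α ε K τ stil s = α := by
  have h1ε : (1:ℝ) - ε ≠ 0 := by have := hε.2; intro h; linarith
  have hK0 : ((K:ℝ)) ≠ 0 := by positivity
  unfold robustGrad
  rw [if_pos hstil]
  have : ∑ y : Fin K, ((if s y ≤ τ then (1:ℝ) else 0) - (1 - α)) = (K:ℝ) * α := by
    calc ∑ y : Fin K, ((if s y ≤ τ then (1:ℝ) else 0) - (1 - α))
        = ∑ _y : Fin K, α := Finset.sum_congr rfl fun y _ => by rw [if_pos (hs y)]; ring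
      _ = (K:ℝ) * α := by simp [mul_comm]
  rw [this]
  field_simp
  ring

lemma grad_low (α ε : ℝ) (hε : ε ∈ Set.Ioo (0:ℝ) 1)
    (K : ℕ) (hK : 1 ≤ K) (τ stil : ℝ) (s : Fin K → ℝ)
    (hstil : ¬ stil ≤ τ) (hs : ∀ y, ¬ s y ≤ τ) :
    robustGrad α ε K τ stil s = α - 1 := by
  have h1ε : (1:ℝ) - ε ≠ 0 := by have := hε.2; intro h; linarith
  have hK0 : ((K:ℝ)) ≠ 0 := by positivity
  unfold robustGrad
  rw [if_neg hstil]
  have : ∑ y : Fin K, ((if s y ≤ τ then (1:ℝ) else 0) - (1 - α)) = (K:ℝ) * (α - 1) := by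
    calc ∑ y : Fin K, ((if s y ≤ τ then (1:ℝ) else 0) - (1 - α))
        = ∑ _y : Fin K, (α - 1) := Finset.sum_congr rfl fun y _ => by rw [if_neg (hs y)]; ring
      _ = (K:ℝ) * (α - 1) := by simp [mul_comm]; ring
  rw [this]
  field_simp
  ring

end helpers

/-- boundedness of the NR-OCP threshold iterates under dynamic learning rates.
The maximum over the (possibly empty) index set `1 ≤ t ≤ T - 1` is taken as a real-valued
supremum, which equals `0` for the empty set (Mathlib's convention `sSup ∅ = 0` for `ℝ`). -/
theorem nrocp_threshold_bounded_dynamic_lr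
    (α ε : ℝ) (hα : α ∈ Set.Ioo (0:ℝ) 1) (hε : ε ∈ Set.Ioo (0:ℝ) 1)
    (K : ℕ) (hK : 1 ≤ K)
    (η : ℕ → ℝ) (hη : ∀ t, 1 ≤ t → 0 < η t)
    (stil : ℕ → ℝ) (hstil : ∀ t, 1 ≤ t → stil t ∈ Set.Icc (0:ℝ) 1)
    (s : ℕ → Fin K → ℝ) (hs : ∀ t, 1 ≤ t → ∀ y, s t y ∈ Set.Icc (0:ℝ) 1)
    (τ : ℕ → ℝ) (hτ1 : τ 1 ∈ Set.Icc (0:ℝ) 1)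
    (hupd : ∀ t, 1 ≤ t → τ (t + 1) = τ t - η t * robustGrad α ε K (τ t) (stil t) (s t))
    (T : ℕ) (hT : 1 ≤ T) :
    -(⨆ t ∈ Finset.Icc 1 (T - 1), η t) * (α + ε / (1 - ε)) ≤ τ T ∧
      τ T ≤ 1 + (⨆ t ∈ Finset.Icc 1 (T - 1), η t) * (1 / (1 - ε) - α) := by
  obtain ⟨hα0, hα1⟩ := hα
  obtain ⟨hε0, hε1⟩ := hε
  have h1ε : (0:ℝ) < 1 - ε := by linarith
  -- the constants
  set Gm : ℝ := α + ε / (1 - ε) with hGm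
  set Gp : ℝ := 1 / (1 - ε) - α with hGp
  have hGm0 : 0 < Gm := by have : 0 < ε / (1 - ε) := by positivity
                           rw [hGm]; linarith
  have hGp0 : 0 < Gp := by
    rw [hGp]
    have h2 : α < 1 / (1 - ε) := by
      rw [lt_div_iff₀ h1ε]
      nlinarith
    linarith
  have hηnn : ∀ n : ℕ, ∀ t ∈ Finset.Icc 1 n, 0 ≤ η t := by
    intro n t ht
    exact (hη t (Finset.mem_Icc.mp ht).1).le
  -- the running max
  set M : ℕ → ℝ := fun n => ⨆ t ∈ Finset.Icc 1 (n - 1), η t with hM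
  have hM0 : ∀ n, 0 ≤ M n := fun n => biSup_mem_nonneg _ _ (hηnn _)
  have hMmono : ∀ n, M n ≤ M (n + 1) := by
    intro n
    exact biSup_mem_mono _ _ _ (hηnn _) (Finset.Icc_subset_Icc_right (by omega))
  have hηM : ∀ t, 1 ≤ t → η t ≤ M (t + 1) := by
    intro t ht
    refine le_biSup_mem _ _ (hηnn _) ?_
    simp only [Nat.add_sub_cancel, Finset.mem_Icc]
    omega
  have hM1 : M 1 = 0 := by
    have : Finset.Icc 1 (1 - 1) = (∅ : Finset ℕ) := by decide
    rw [hM]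
    simp only [this]
    have : ∀ t : ℕ, (⨆ (_ : t ∈ (∅ : Finset ℕ)), η t) = 0 := by
      intro t
      haveI : IsEmpty (t ∈ (∅ : Finset ℕ)) := ⟨by simp⟩
      exact Real.iSup_of_isEmpty _
    simp only [this, ciSup_const]
  -- main induction
  suffices h : ∀ n, 1 ≤ n → -(M n) * Gm ≤ τ n ∧ τ n ≤ 1 + M n * Gp from h T hT
  intro n hn
  induction n, hn using Nat.le_induction with
  | base =>
    rw [hM1]
    simpa using ⟨hτ1.1, hτ1.2⟩
  | succ t ht ih =>
    obtain ⟨ihl, ihu⟩ := ih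
    have hMM' := hMmono t
    have hηM' := hηM t ht
    have hηt := hη t ht
    have hupd' := hupd t ht
    constructor
    · -- lower bound
      by_cases hτ0 : 0 ≤ τ t
      · have hg := (grad_bounds α ε ⟨hα0, hα1⟩ ⟨hε0, hε1⟩ K hK (τ t) (stil t) (s t)
          (hstil t ht) (hs t ht)).2
        rw [← hGm] at hg
        rw [hupd']
        have h1 : η t * robustGrad α ε K (τ t) (stil t) (s t) ≤ η t * Gm :=
          mul_le_mul_of_nonneg_left hg hηt.le
        have h2 : η t * Gm ≤ M (t + 1) * Gm := mul_le_mul_of_nonneg_right hηM' hGm0.le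
        nlinarith
      · push_neg at hτ0
        have hgl : robustGrad α ε K (τ t) (stil t) (s t) = α - 1 := by
          refine grad_low α ε ⟨hε0, hε1⟩ K hK (τ t) (stil t) (s t) ?_ ?_
          · have := (hstil t ht).1; intro h; linarith
          · intro y; have := (hs t ht y).1; intro h; linarith
        rw [hupd', hgl]
        have h1 : -(M t) * Gm ≤ τ t := ihl
        have h2 : -(M (t + 1)) * Gm ≤ -(M t) * Gm := by
          have := mul_le_mul_of_nonneg_right hMM' hGm0.le
          linarith
        nlinarith
    · -- upper bound
      by_cases hτ1' : τ t ≤ 1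
      · have hg := (grad_bounds α ε ⟨hα0, hα1⟩ ⟨hε0, hε1⟩ K hK (τ t) (stil t) (s t)
          (hstil t ht) (hs t ht)).1
        rw [hupd']
        rw [← hGp] at hg
        have h1 : -(η t * Gp) ≤ η t * robustGrad α ε K (τ t) (stil t) (s t) := by
          have := mul_le_mul_of_nonneg_left hg hηt.le
          linarith [this]
        have h2 : η t * Gp ≤ M (t + 1) * Gp := mul_le_mul_of_nonneg_right hηM' hGp0.le
        linarith
      · push_neg at hτ1'
        have hgh : robustGrad α ε K (τ t) (stil t) (s t) = α := by
          refine grad_high α ε ⟨hε0, hε1⟩ K hK (τ t) (stil t) (s t) ?_ ?_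
          · have := (hstil t ht).2; linarith
          · intro y; have := (hs t ht y).2; linarith
        rw [hupd', hgh]
        have h2 : M t * Gp ≤ M (t + 1) * Gp := mul_le_mul_of_nonneg_right hMM' hGp0.le
        nlinarith
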